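/- Let 0 < p < 4 and let w̄ be the ℓ_p Lewis weights of A. If w is any positive weight vector with w ≈_α w̄ entrywise, then T(w) ≈_{α^{|p/2−1|}} w̄, where T(w)_i = (a_iᵀ(AᵀW^{1−2/p}A)⁻¹a_i)^{p/2}. -/

import Mathlib

open Matrix

lemma quadForm {n d : ℕ} (A : Matrix (Fin n) (Fin d) ℝ) (v : Fin n → ℝ) (x : Fin d → ℝ) :
    x ⬝ᵥ (Aᵀ * Matrix.diagonal v * A) *ᵥ x = ∑ j, v j * (A *ᵥ x) j ^ 2 := by
  rw [← mulVec_mulVec, ← mulVec_mulVec, dotProduct_mulVec, vecMul_transpose]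
  simp only [dotProduct, mulVec_diagonal, sq]
  exact Finset.sum_congr rfl fun j _ => by ring

lemma symQuad {d : ℕ} {M : Matrix (Fin d) (Fin d) ℝ} (h : Mᵀ = M) (x y : Fin d → ℝ) :
    x ⬝ᵥ M *ᵥ y = y ⬝ᵥ M *ᵥ x := by
  conv_lhs => rw [dotProduct_mulVec, ← mulVec_transpose, h]
  exact dotProduct_comm _ _

lemma injOfRank {n d : ℕ} (A : Matrix (Fin n) (Fin d) ℝ) (hA : A.rank = d) :
    Function.Injective A.mulVec := by
  rw [← Matrix.coe_mulVecLin]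
  rw [← LinearMap.ker_eq_bot]
  have h1 := A.mulVecLin.finrank_range_add_finrank_ker
  rw [Matrix.rank] at hA
  have h2 : Module.finrank ℝ (Fin d → ℝ) = d := Module.finrank_fin_fun ℝ
  rw [hA, h2] at h1
  have h3 : Module.finrank ℝ (LinearMap.ker A.mulVecLin) = 0 := by omega
  exact Submodule.finrank_eq_zero.mp h3

lemma posDefForm {n d : ℕ} (A : Matrix (Fin n) (Fin d) ℝ) (hA : Function.Injective A.mulVec)
    (v : Fin n → ℝ) (hv : ∀ j, 0 < v j) : (Aᵀ * Matrix.diagonal v * A).PosDef := by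
  refine Matrix.PosDef.of_dotProduct_mulVec_pos ?_ ?_
  · rw [Matrix.IsHermitian, conjTranspose_eq_transpose_of_trivial]
    rw [transpose_mul, transpose_mul, transpose_transpose, diagonal_transpose, Matrix.mul_assoc]
  · intro x hx
    rw [star_trivial, quadForm]
    have hAx : A *ᵥ x ≠ 0 := by
      intro h
      exact hx (hA (h.trans (A.mulVec_zero).symm))
    obtain ⟨j, hj⟩ := Function.ne_iff.mp hAx
    apply Finset.sum_pos' (fun k _ => mul_nonneg (hv k).le (sq_nonneg _))
    exact ⟨j, Finset.mem_univ j, mul_pos (hv j) (pow_pos (abs_pos.mpr hj) 2 |> fun h => by simpa [sq_abs] using h)⟩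

lemma csQuad {d : ℕ} {M : Matrix (Fin d) (Fin d) ℝ} (h : Mᵀ = M)
    (hpos : ∀ x, 0 ≤ x ⬝ᵥ M *ᵥ x) (u v : Fin d → ℝ) :
    (u ⬝ᵥ M *ᵥ v) ^ 2 ≤ (u ⬝ᵥ M *ᵥ u) * (v ⬝ᵥ M *ᵥ v) := by
  have key : ∀ r : ℝ, 0 ≤ (v ⬝ᵥ M *ᵥ v) * (r * r) + (2 * (u ⬝ᵥ M *ᵥ v)) * r + (u ⬝ᵥ M *ᵥ u) := by
    intro r
    have h0 := hpos (u + r • v)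
    have hexp : (u + r • v) ⬝ᵥ M *ᵥ (u + r • v)
        = (v ⬝ᵥ M *ᵥ v) * (r * r) + (2 * (u ⬝ᵥ M *ᵥ v)) * r + (u ⬝ᵥ M *ᵥ u) := by
      rw [mulVec_add, mulVec_smul, dotProduct_add, add_dotProduct, add_dotProduct,
        dotProduct_smul, smul_dotProduct, smul_dotProduct, dotProduct_smul,
        symQuad h v u]
      simp only [smul_eq_mul]
      ring
    linarith [hexp ▸ h0]
  have hd := discrim_le_zero key
  rw [discrim] at hd
  nlinarith [hd]

lemma invQuadLe {d : ℕ} {M N : Matrix (Fin d) (Fin d) ℝ} (hM : M.PosDef) (hN : N.PosDef)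
    (h : ∀ x, x ⬝ᵥ M *ᵥ x ≤ x ⬝ᵥ N *ᵥ x) (x : Fin d → ℝ) :
    x ⬝ᵥ N⁻¹ *ᵥ x ≤ x ⬝ᵥ M⁻¹ *ᵥ x := by
  have hMdet : IsUnit M.det := hM.det_pos.ne'.isUnit
  have hNdet : IsUnit N.det := hN.det_pos.ne'.isUnit
  have hMt : Mᵀ = M := by
    have := hM.1
    rwa [Matrix.IsHermitian, conjTranspose_eq_transpose_of_trivial] at this
  have hNinvt : N⁻¹ᵀ = N⁻¹ := by
    have := hN.inv.1
    rwa [Matrix.IsHermitian, conjTranspose_eq_transpose_of_trivial] at this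
  have hMinvt : M⁻¹ᵀ = M⁻¹ := by
    have := hM.inv.1
    rwa [Matrix.IsHermitian, conjTranspose_eq_transpose_of_trivial] at this
  set u := N⁻¹ *ᵥ x with hu
  set v := M⁻¹ *ᵥ x with hv
  set s := x ⬝ᵥ N⁻¹ *ᵥ x with hs
  set t := x ⬝ᵥ M⁻¹ *ᵥ x with ht
  have hMv : M *ᵥ v = x := by
    rw [hv, mulVec_mulVec, Matrix.mul_nonsing_inv _ hMdet, one_mulVec]
  have hNu : N *ᵥ u = x := by
    rw [hu, mulVec_mulVec, Matrix.mul_nonsing_inv _ hNdet, one_mulVec]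
  have c1 : u ⬝ᵥ M *ᵥ v = s := by rw [hMv, dotProduct_comm]
  have c2 : u ⬝ᵥ M *ᵥ u ≤ s := by
    calc u ⬝ᵥ M *ᵥ u ≤ u ⬝ᵥ N *ᵥ u := h u
      _ = s := by rw [hNu, dotProduct_comm]
  have c3 : v ⬝ᵥ M *ᵥ v = t := by rw [hMv, dotProduct_comm]
  have hs0 : 0 ≤ s := hN.inv.posSemidef.dotProduct_mulVec_nonneg x |>.trans_eq (by rw [star_trivial])
  have ht0 : 0 ≤ t := hM.inv.posSemidef.dotProduct_mulVec_nonneg x |>.trans_eq (by rw [star_trivial])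
  have hu0 : 0 ≤ u ⬝ᵥ M *ᵥ u := hM.posSemidef.dotProduct_mulVec_nonneg u |>.trans_eq (by rw [star_trivial])
  have cs := csQuad hMt (fun y => hM.posSemidef.dotProduct_mulVec_nonneg y |>.trans_eq (by rw [star_trivial])) u v
  rw [c1, c3] at cs
  have : s ^ 2 ≤ s * t := le_trans cs (mul_le_mul_of_nonneg_right c2 ht0)
  nlinarith

lemma rpowBound {a b c e : ℝ} (hb : 0 < b) (hc : 1 ≤ c) (h1 : (1/c)*b ≤ a) (h2 : a ≤ c*b) :
    (1 / c ^ |e|) * b ^ e ≤ a ^ e ∧ a ^ e ≤ c ^ |e| * b ^ e := by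
  have hc0 : (0:ℝ) < c := lt_of_lt_of_le one_pos hc
  have ha : 0 < a := lt_of_lt_of_le (by positivity) h1
  rcases le_or_gt 0 e with he | he
  · rw [abs_of_nonneg he]
    constructor
    · have heq : ((1/c)*b)^e = (1/c^e)*b^e := by
        rw [Real.mul_rpow (by positivity) hb.le, one_div, one_div, Real.inv_rpow hc0.le]
      rw [← heq]
      exact Real.rpow_le_rpow (by positivity) h1 he
    · calc a^e ≤ (c*b)^e := Real.rpow_le_rpow ha.le h2 he
        _ = c^e*b^e := Real.mul_rpow hc0.le hb.le
  · rw [abs_of_neg he]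
    have hcne : c ^ (-e) = (c ^ e)⁻¹ := Real.rpow_neg hc0.le e
    constructor
    · have h3 : (c*b)^e ≤ a^e := Real.rpow_le_rpow_of_nonpos ha h2 he.le
      calc (1/c^(-e))*b^e = (c*b)^e := by
            rw [hcne, one_div, inv_inv, Real.mul_rpow hc0.le hb.le]
        _ ≤ a^e := h3
    · have h3 : a^e ≤ ((1/c)*b)^e := Real.rpow_le_rpow_of_nonpos (by positivity) h1 he.le
      calc a^e ≤ ((1/c)*b)^e := h3
        _ = c^(-e)*b^e := by
            rw [Real.mul_rpow (by positivity) hb.le, one_div, Real.inv_rpow hc0.le, ← hcne]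

theorem stmt7 {n d : ℕ} (A : Matrix (Fin n) (Fin d) ℝ) (hA : A.rank = d)
    (p α : ℝ) (hp : 0 < p) (hp4 : p < 4) (hα : 1 ≤ α)
    (wbar w : Fin n → ℝ) (hwbar : ∀ i, 0 < wbar i) (hw : ∀ i, 0 < w i)
    (hlewis : ∀ i,
      (A i ⬝ᵥ (Aᵀ * Matrix.diagonal (fun j => wbar j ^ (1 - 2 / p)) * A)⁻¹.mulVec (A i)) ^ (p / 2)
        = wbar i)
    (happrox : ∀ i, (1 / α) * wbar i ≤ w i ∧ w i ≤ α * wbar i) :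
    ∀ i,
      (1 / (α ^ |p / 2 - 1|)) * wbar i
        ≤ (A i ⬝ᵥ (Aᵀ * Matrix.diagonal (fun j => w j ^ (1 - 2 / p)) * A)⁻¹.mulVec (A i)) ^ (p / 2) ∧
      (A i ⬝ᵥ (Aᵀ * Matrix.diagonal (fun j => w j ^ (1 - 2 / p)) * A)⁻¹.mulVec (A i)) ^ (p / 2)
        ≤ (α ^ |p / 2 - 1|) * wbar i := by
  intro i
  have hα0 : (0:ℝ) < α := lt_of_lt_of_le one_pos hα
  set e : ℝ := 1 - 2 / p with he
  set β : ℝ := α ^ |e| with hβdef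
  have hβ1 : 1 ≤ β := Real.one_le_rpow hα (abs_nonneg e)
  have hβ0 : (0:ℝ) < β := lt_of_lt_of_le one_pos hβ1
  have hinj : Function.Injective A.mulVec := injOfRank A hA
  set vw : Fin n → ℝ := fun j => w j ^ e with hvw
  set vb : Fin n → ℝ := fun j => wbar j ^ e with hvb
  have hvwpos : ∀ j, 0 < vw j := fun j => Real.rpow_pos_of_pos (hw j) e
  have hvbpos : ∀ j, 0 < vb j := fun j => Real.rpow_pos_of_pos (hwbar j) e
  have hcomp : ∀ j, (1 / β) * vb j ≤ vw j ∧ vw j ≤ β * vb j :=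
    fun j => rpowBound (hwbar j) hα (happrox j).1 (happrox j).2
  set Mw : Matrix (Fin d) (Fin d) ℝ := Aᵀ * Matrix.diagonal vw * A with hMw
  set Mb : Matrix (Fin d) (Fin d) ℝ := Aᵀ * Matrix.diagonal vb * A with hMb
  have hPDw : Mw.PosDef := posDefForm A hinj vw hvwpos
  have hPDb : Mb.PosDef := posDefForm A hinj vb hvbpos
  have hsmul : ∀ c : ℝ, Aᵀ * Matrix.diagonal (fun j => c * vb j) * A = c • Mb := by
    intro c
    have : (fun j => c * vb j) = c • vb := by funext j; simp
    rw [this, diagonal_smul, Matrix.mul_smul, Matrix.smul_mul]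
  haveI : Invertible β := invertibleOfNonzero hβ0.ne'
  haveI : Invertible β⁻¹ := invertibleOfNonzero (by positivity)
  have hmulinv : ∀ c : ℝ, c ≠ 0 → (c • Mb)⁻¹ = c⁻¹ • Mb⁻¹ := by
    intro c hc
    apply Matrix.inv_eq_left_inv
    rw [Matrix.smul_mul, Matrix.mul_smul, smul_smul, inv_mul_cancel₀ hc, one_smul,
      Matrix.nonsing_inv_mul _ hPDb.det_pos.ne'.isUnit]
  have hβMbinv : (β • Mb)⁻¹ = β⁻¹ • Mb⁻¹ := hmulinv β hβ0.ne'
  have hβinvMbinv : (β⁻¹ • Mb)⁻¹ = β • Mb⁻¹ := by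
    rw [hmulinv β⁻¹ (by positivity), inv_inv]
  -- upper comparison of quadratic forms: Mw ≤ β • Mb
  have hPDβ : (β • Mb).PosDef := by
    rw [← hsmul β]
    exact posDefForm A hinj _ (fun j => mul_pos hβ0 (hvbpos j))
  have hPDβ' : (β⁻¹ • Mb).PosDef := by
    rw [← hsmul β⁻¹]
    exact posDefForm A hinj _ (fun j => mul_pos (by positivity) (hvbpos j))
  have hub : ∀ x, x ⬝ᵥ Mw *ᵥ x ≤ x ⬝ᵥ (β • Mb) *ᵥ x := by
    intro x
    rw [← hsmul β, hMw, quadForm, quadForm]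
    exact Finset.sum_le_sum fun j _ =>
      mul_le_mul_of_nonneg_right (hcomp j).2 (sq_nonneg _)
  have hlb : ∀ x, x ⬝ᵥ (β⁻¹ • Mb) *ᵥ x ≤ x ⬝ᵥ Mw *ᵥ x := by
    intro x
    rw [← hsmul β⁻¹, hMw, quadForm, quadForm]
    refine Finset.sum_le_sum fun j _ => mul_le_mul_of_nonneg_right ?_ (sq_nonneg _)
    have := (hcomp j).1
    rwa [one_div] at this
  set q : ℝ := A i ⬝ᵥ Mw⁻¹ *ᵥ A i with hq
  set qb : ℝ := A i ⬝ᵥ Mb⁻¹ *ᵥ A i with hqb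
  have hqb0 : 0 ≤ qb := hPDb.inv.posSemidef.dotProduct_mulVec_nonneg (A i) |>.trans_eq (by rw [star_trivial])
  have hup : q ≤ β * qb := by
    have := invQuadLe hPDβ' hPDw hlb (A i)
    rwa [hβinvMbinv, smul_mulVec, dotProduct_smul, smul_eq_mul] at this
  have hlo : β⁻¹ * qb ≤ q := by
    have := invQuadLe hPDw hPDβ hub (A i)
    rwa [hβMbinv, smul_mulVec, dotProduct_smul, smul_eq_mul] at this
  have hq0 : 0 ≤ q := le_trans (by positivity) hlo
  have hexp : β ^ (p/2) = α ^ |p/2 - 1| := by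
    rw [hβdef, ← Real.rpow_mul hα0.le]
    congr 1
    have hpe : e * (p/2) = p/2 - 1 := by
      rw [he]
      field_simp
    rw [← hpe, abs_mul, abs_of_pos (show (0:ℝ) < p/2 by positivity)]
  have hlew : qb ^ (p/2) = wbar i := hlewis i
  constructor
  · have h1 : (β⁻¹ * qb) ^ (p/2) ≤ q ^ (p/2) :=
      Real.rpow_le_rpow (by positivity) hlo (by positivity)
    have h2 : (β⁻¹ * qb) ^ (p/2) = (β ^ (p/2))⁻¹ * wbar i := by
      rw [Real.mul_rpow (by positivity) hqb0, Real.inv_rpow hβ0.le, hlew]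
    rw [← hexp, one_div]
    rw [h2] at h1
    exact h1
  · have h1 : q ^ (p/2) ≤ (β * qb) ^ (p/2) :=
      Real.rpow_le_rpow hq0 hup (by positivity)
    have h2 : (β * qb) ^ (p/2) = β ^ (p/2) * wbar i := by
      rw [Real.mul_rpow hβ0.le hqb0, hlew]
    rw [← hexp]
    rw [h2] at h1
    exact h1
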